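/- Suppose in addition that ψ† has a B†-Lipschitz gradient with B† ≥ β†, that φ† is (1/B†)-strongly convex with ψ†(x) = ⟨∇ψ†(x), x⟩ − φ†(∇ψ†(x)) and ∇φ†(∇ψ†(x)) = x for all x, and that ∫ ψ†(x) dP(x) + ∫ φ†(y) dQ(y) ≤ Corr(P, Q) + ε for some ε ≥ 0. Then the forward generative property for the single-discriminator method holds: W₂²((∇ψ†)_*P, Q) ≤ ε · B†. -/

import Mathlib

open MeasureTheory ENNReal
open scoped RealInnerProductSpace

/-- Squared Wasserstein-2 distance: infimum over couplings of `∫ ‖x - y‖² / 2`. -/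
noncomputable def W2sq {E : Type*} [NormedAddCommGroup E] [MeasurableSpace E]
    (μ ν : Measure E) : ℝ≥0∞ :=
  ⨅ (π : Measure (E × E)) (_ : IsProbabilityMeasure π)
    (_ : π.map Prod.fst = μ) (_ : π.map Prod.snd = ν),
    ∫⁻ p, ENNReal.ofReal (‖p.1 - p.2‖ ^ 2 / 2) ∂π

/-- First-order inequality for strongly convex differentiable functions. -/
lemma strong_first_order {E : Type*} [NormedAddCommGroup E] [InnerProductSpace ℝ E]
    [CompleteSpace E] {g : E → ℝ} {c : ℝ}
    (hc : ConvexOn ℝ Set.univ (fun y => g y - c / 2 * ‖y‖ ^ 2))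
    {a b ga : E} (hga : HasGradientAt g ga a) :
    g a + ⟪ga, b - a⟫ + c / 2 * ‖b - a‖ ^ 2 ≤ g b := by
  set L : ℝ → E := fun t => AffineMap.lineMap a b t with hLdef
  have hL0 : L 0 = a := AffineMap.lineMap_apply_zero a b
  have hL1 : L 1 = b := AffineMap.lineMap_apply_one a b
  have hr : ConvexOn ℝ Set.univ (fun t : ℝ => g (L t) - c / 2 * ‖L t‖ ^ 2) := by
    have := hc.comp_affineMap (AffineMap.lineMap a b)
    simpa [Function.comp_def] using this
  have hL : HasDerivAt L (b - a) 0 := by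
    have h1 : HasDerivAt (fun t : ℝ => t • (b - a) + a) ((1 : ℝ) • (b - a)) 0 :=
      ((hasDerivAt_id (0 : ℝ)).smul_const (b - a)).add_const a
    have : L = fun t : ℝ => t • (b - a) + a := by
      funext t; simp only [hLdef, AffineMap.lineMap_apply, vsub_eq_sub, vadd_eq_add]
    rw [this]; simpa using h1
  have hgF : HasFDerivAt g (InnerProductSpace.toDual ℝ E ga) a :=
    (hasGradientAt_iff_hasFDerivAt).mp hga
  have hd1 : HasDerivAt (fun t => g (L t)) ⟪ga, b - a⟫ 0 := by
    have hgF' : HasFDerivAt g (InnerProductSpace.toDual ℝ E ga) (L 0) := hL0 ▸ hgF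
    have := hgF'.comp_hasDerivAt 0 hL
    simpa [InnerProductSpace.toDual_apply_apply, Function.comp_def] using this
  have hd2 : HasDerivAt (fun t => ⟪L t, L t⟫) (2 * ⟪a, b - a⟫) 0 := by
    have := (HasDerivAt.inner ℝ hL hL)
    rw [hL0] at this
    have h2 : ⟪a, b - a⟫ + ⟪b - a, a⟫ = 2 * ⟪a, b - a⟫ := by
      rw [real_inner_comm (b - a) a]; ring
    rwa [h2] at this
  have hnorm : (fun t => g (L t) - c / 2 * ‖L t‖ ^ 2)
      = fun t => g (L t) - c / 2 * ⟪L t, L t⟫ := by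
    funext t; rw [real_inner_self_eq_norm_sq]
  have hd : HasDerivAt (fun t => g (L t) - c / 2 * ‖L t‖ ^ 2)
      (⟪ga, b - a⟫ - c / 2 * (2 * ⟪a, b - a⟫)) 0 := by
    rw [hnorm]; exact hd1.sub (hd2.const_mul (c / 2))
  have key := hr.le_slope_of_hasDerivAt (Set.mem_univ 0) (Set.mem_univ 1) zero_lt_one hd
  rw [slope_def_field] at key
  simp only [hL0, hL1] at key
  have hexp : ‖b - a‖ ^ 2 = ‖b‖ ^ 2 - 2 * ⟪a, b⟫ + ‖a‖ ^ 2 := by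
    rw [← real_inner_self_eq_norm_sq, ← real_inner_self_eq_norm_sq, ← real_inner_self_eq_norm_sq]
    simp only [inner_sub_left, inner_sub_right]
    rw [real_inner_comm b a]; ring
  have hib : ⟪a, b - a⟫ = ⟪a, b⟫ - ‖a‖ ^ 2 := by
    rw [inner_sub_right, real_inner_self_eq_norm_sq]
  rw [show (1:ℝ) - 0 = 1 by ring, div_one] at key
  have e1 : c / 2 * ‖b - a‖ ^ 2 = c / 2 * ‖b‖ ^ 2 - c * ⟪a, b⟫ + c / 2 * ‖a‖ ^ 2 := by
    rw [hexp]; ring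
  have e2 : c / 2 * (2 * ⟪a, b - a⟫) = c * ⟪a, b⟫ - c * ‖a‖ ^ 2 := by rw [hib]; ring
  linarith [key, e1, e2]

/-- Forward generative property of the single-discriminator method:
if `∇ψ†` is `B†`-Lipschitz, `φ†` is `(1/B†)`-strongly convex and
`∫ ψ† dP + ∫ φ† dQ ≤ Corr(P,Q) + ε`, then `W₂²((∇ψ†)_*P, Q) ≤ ε·B†`. -/
theorem single_discriminator_forward_generative {D : ℕ}
    (P Q : Measure (EuclideanSpace ℝ (Fin D)))
    [IsProbabilityMeasure P] [IsProbabilityMeasure Q]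
    (hP2 : Integrable (fun x => ‖x‖ ^ 2) P)
    (hQ2 : Integrable (fun y => ‖y‖ ^ 2) Q)
    -- Brenier potentials
    (ψs φs : EuclideanSpace ℝ (Fin D) → ℝ)
    (hψs : Differentiable ℝ ψs) (hψsc : ConvexOn ℝ Set.univ ψs)
    (hφs : Differentiable ℝ φs) (hφsc : ConvexOn ℝ Set.univ φs)
    (hinv : ∀ y, gradient ψs (gradient φs y) = y)
    (hQP : Q.map (gradient φs) = P)
    (hPQ : P.map (gradient ψs) = Q)
    -- discriminator and its conjugate
    (ψd : EuclideanSpace ℝ (Fin D) → ℝ) (hψd : Differentiable ℝ ψd)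
    (βd : ℝ) (hβd : 0 < βd)
    (hstrong : ConvexOn ℝ Set.univ (fun x => ψd x - βd / 2 * ‖x‖ ^ 2))
    (φd : EuclideanSpace ℝ (Fin D) → ℝ) (hφd : Differentiable ℝ φd)
    (hφdc : ConvexOn ℝ Set.univ φd)
    (hconj : ∀ y, φd y = ⟪gradient φd y, y⟫ - ψd (gradient φd y))
    (hdinv : ∀ y, gradient ψd (gradient φd y) = y)
    -- `∇ψ†` is `B†`-Lipschitz with `B† ≥ β†`
    (Bd : ℝ) (hBd : βd ≤ Bd)
    (hBdLip : ∀ x x', ‖gradient ψd x - gradient ψd x'‖ ≤ Bd * ‖x - x'‖)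
    -- `φ†` is `(1/B†)`-strongly convex and conjugate also in the other direction
    (hφdstrong : ConvexOn ℝ Set.univ (fun y => φd y - (1 / Bd) / 2 * ‖y‖ ^ 2))
    (hconj' : ∀ x, ψd x = ⟪gradient ψd x, x⟫ - φd (gradient ψd x))
    (hdinv' : ∀ x, gradient φd (gradient ψd x) = x)
    -- integrability of all the integrals involved
    (hI1 : Integrable ψd P)
    (hI2 : Integrable φd Q)
    (hI3 : Integrable (fun y => ⟪y, gradient φs y⟫) Q)
    (ε : ℝ) (hε : 0 ≤ ε)
    (hclose : (∫ x, ψd x ∂P) + (∫ y, φd y ∂Q) ≤ (∫ y, ⟪y, gradient φs y⟫ ∂Q) + ε) :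
    W2sq (P.map (gradient ψd)) Q ≤ ENNReal.ofReal (ε * Bd) := by
  have hBd0 : (0 : ℝ) < Bd := lt_of_lt_of_le hβd hBd
  -- measurability
  have hTlip : LipschitzWith (Real.toNNReal Bd) (gradient ψd) := by
    apply LipschitzWith.of_dist_le_mul
    intro x x'
    rw [dist_eq_norm, dist_eq_norm, Real.coe_toNNReal _ hBd0.le]
    exact hBdLip x x'
  have hTm : Measurable (gradient ψd) := hTlip.continuous.measurable
  have hSm : Measurable (gradient φs) := by
    have hgr : gradient φs =
        fun x => (InnerProductSpace.toDual ℝ (EuclideanSpace ℝ (Fin D))).symm (fderiv ℝ φs x) :=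
      rfl
    rw [hgr]
    exact (LinearIsometryEquiv.continuous _).measurable.comp (measurable_fderiv ℝ φs)
  -- pointwise key inequality
  have key : ∀ y, 1 / Bd / 2 * ‖y - gradient ψd (gradient φs y)‖ ^ 2
      ≤ ψd (gradient φs y) + φd y - ⟪y, gradient φs y⟫ := by
    intro y
    set x := gradient φs y with hx
    have hga : HasGradientAt φd x (gradient ψd x) := by
      have := (hφd (gradient ψd x)).hasGradientAt
      rwa [hdinv' x] at this
    have h := strong_first_order hφdstrong (b := y) hga
    have hc := hconj' x
    have e1 : ⟪x, y - gradient ψd x⟫ = ⟪y, x⟫ - ⟪gradient ψd x, x⟫ := by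
      rw [inner_sub_right, real_inner_comm x y, real_inner_comm x (gradient ψd x)]
    have e2 : ⟪y, x⟫ = ⟪y, gradient φs y⟫ := by rw [hx]
    linarith [h, hc, e1]
  -- integral manipulations
  have hψd_cont : Continuous ψd := hψd.continuous
  have hIψS : Integrable (fun y => ψd (gradient φs y)) Q := by
    have hI1' : Integrable ψd (Q.map (gradient φs)) := by rwa [hQP]
    exact (integrable_map_measure hψd_cont.aestronglyMeasurable hSm.aemeasurable).mp hI1'
  have hEq1 : ∫ x, ψd x ∂P = ∫ y, ψd (gradient φs y) ∂Q := by
    rw [← hQP, integral_map hSm.aemeasurable hψd_cont.aestronglyMeasurable]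
  set F : EuclideanSpace ℝ (Fin D) → ℝ :=
    fun y => ψd (gradient φs y) + φd y - ⟪y, gradient φs y⟫ with hF
  have hIadd : Integrable (fun y => ψd (gradient φs y) + φd y) Q := hIψS.add hI2
  have hIF : Integrable F Q := hIadd.sub hI3
  have hFnn : ∀ y, 0 ≤ F y := fun y => le_trans (by positivity) (key y)
  have hFint : ∫ y, F y ∂Q ≤ ε := by
    have h4 : ∫ y, F y ∂Q
        = ∫ y, (ψd (gradient φs y) + φd y) - ⟪y, gradient φs y⟫ ∂Q := rfl
    rw [h4, integral_sub hIadd hI3, integral_add hIψS hI2, ← hEq1]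
    linarith [hclose]
  -- integrability of the squared distance
  have hGm : Measurable (fun y : EuclideanSpace ℝ (Fin D) =>
      ‖y - gradient ψd (gradient φs y)‖ ^ 2) :=
    ((measurable_id.sub (hTm.comp hSm)).norm).pow_const 2
  have hIG : Integrable (fun y => ‖y - gradient ψd (gradient φs y)‖ ^ 2) Q := by
    refine Integrable.mono' (hIF.const_mul (2 * Bd)) hGm.aestronglyMeasurable ?_
    filter_upwards with y
    rw [Real.norm_eq_abs, abs_of_nonneg (by positivity)]
    have h := mul_le_mul_of_nonneg_left (key y) (by positivity : (0:ℝ) ≤ 2 * Bd)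
    have e : 2 * Bd * (1 / Bd / 2 * ‖y - gradient ψd (gradient φs y)‖ ^ 2)
        = ‖y - gradient ψd (gradient φs y)‖ ^ 2 := by field_simp
    rw [e] at h
    simp only [hF]
    linarith
  have hIbound : ∫ y, ‖y - gradient ψd (gradient φs y)‖ ^ 2 / 2 ∂Q ≤ ε * Bd := by
    have hle : ∀ y, ‖y - gradient ψd (gradient φs y)‖ ^ 2 / 2 ≤ Bd * F y := by
      intro y
      have h := mul_le_mul_of_nonneg_left (key y) hBd0.le
      have e : Bd * (1 / Bd / 2 * ‖y - gradient ψd (gradient φs y)‖ ^ 2)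
          = ‖y - gradient ψd (gradient φs y)‖ ^ 2 / 2 := by field_simp
      rw [e] at h
      simp only [hF]
      exact h
    have hmono := integral_mono (hIG.div_const 2) (hIF.const_mul Bd) (fun y => hle y)
    rw [integral_const_mul] at hmono
    have : Bd * ∫ y, F y ∂Q ≤ Bd * ε := mul_le_mul_of_nonneg_left hFint hBd0.le
    linarith
  -- the coupling
  set g0 : EuclideanSpace ℝ (Fin D) → EuclideanSpace ℝ (Fin D) × EuclideanSpace ℝ (Fin D) :=
    fun y => (gradient ψd (gradient φs y), y) with hg0
  have hg0m : Measurable g0 := (hTm.comp hSm).prodMk measurable_id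
  have hπprob : IsProbabilityMeasure (Q.map g0) := Measure.isProbabilityMeasure_map hg0m.aemeasurable
  have h1 : (Q.map g0).map Prod.fst = P.map (gradient ψd) := by
    rw [Measure.map_map measurable_fst hg0m]
    have hcomp : (Prod.fst ∘ g0) = (gradient ψd) ∘ (gradient φs) := rfl
    rw [hcomp, ← Measure.map_map hTm hSm, hQP]
  have h2 : (Q.map g0).map Prod.snd = Q := by
    rw [Measure.map_map measurable_snd hg0m]
    have hcomp : (Prod.snd ∘ g0) = id := rfl
    rw [hcomp, Measure.map_id]
  have hW : W2sq (P.map (gradient ψd)) Q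
      ≤ ∫⁻ p, ENNReal.ofReal (‖p.1 - p.2‖ ^ 2 / 2) ∂(Q.map g0) := by
    unfold W2sq
    exact iInf_le_of_le (Q.map g0) (iInf_le_of_le hπprob (iInf_le_of_le h1 (iInf_le_of_le h2 le_rfl)))
  have hfm : Measurable (fun p : EuclideanSpace ℝ (Fin D) × EuclideanSpace ℝ (Fin D) =>
      ENNReal.ofReal (‖p.1 - p.2‖ ^ 2 / 2)) :=
    (((measurable_fst.sub measurable_snd).norm.pow_const 2).div_const 2).ennreal_ofReal
  have hmap : ∫⁻ p, ENNReal.ofReal (‖p.1 - p.2‖ ^ 2 / 2) ∂(Q.map g0)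
      = ∫⁻ y, ENNReal.ofReal (‖y - gradient ψd (gradient φs y)‖ ^ 2 / 2) ∂Q := by
    rw [lintegral_map hfm hg0m]
    refine lintegral_congr fun y => ?_
    show ENNReal.ofReal (‖gradient ψd (gradient φs y) - y‖ ^ 2 / 2) = _
    rw [norm_sub_rev]
  have hlin : ∫⁻ y, ENNReal.ofReal (‖y - gradient ψd (gradient φs y)‖ ^ 2 / 2) ∂Q
      = ENNReal.ofReal (∫ y, ‖y - gradient ψd (gradient φs y)‖ ^ 2 / 2 ∂Q) := by
    rw [ofReal_integral_eq_lintegral_ofReal (hIG.div_const 2)]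
    filter_upwards with y
    positivity
  calc W2sq (P.map (gradient ψd)) Q
      ≤ ∫⁻ p, ENNReal.ofReal (‖p.1 - p.2‖ ^ 2 / 2) ∂(Q.map g0) := hW
    _ = ENNReal.ofReal (∫ y, ‖y - gradient ψd (gradient φs y)‖ ^ 2 / 2 ∂Q) := by
        rw [hmap, hlin]
    _ ≤ ENNReal.ofReal (ε * Bd) := ENNReal.ofReal_le_ofReal hIbound
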